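/- Let A = ℤ⟨X,Y⟩, p a prime, and let φ : A → A be the unique additive group homomorphism with φ(w) = w^p for every word w in X, Y (including the empty word). Then φ([A,A]) ⊆ [A,A]. -/

import Mathlib

/-- Words in the two letters `X, Y`. -/
abbrev FW := FreeMonoid (Fin 2)

/-- `A = ℤ⟨X,Y⟩`; as an abelian group it is free on the set of words. -/
abbrev A2 := MonoidAlgebra ℤ FW

/-- The set of commutators of `A`, generating `[A,A]`. -/
def commA : Set A2 := {x | ∃ a b : A2, x = a * b - b * a}

/-- `(xy)^{n+1} = x ((yx)^n y)`. -/
lemma pow_succ_mul' {R : Type*} [Ring R] (x y : R) : ∀ n : ℕ, (x*y)^(n+1) = x * ((y*x)^n * y)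
  | 0 => by simp
  | (n+1) => by
    rw [pow_succ' (x*y), pow_succ_mul' x y n, pow_succ' (y*x)]
    simp [mul_assoc]

/-- let `φ : A → A` be the (unique) additive group homomorphism with
`φ(w) = w^p` for every word `w` (including the empty word). Then `φ([A,A]) ⊆ [A,A]`. -/
theorem stmt13 (p : ℕ) (hp : p.Prime) (φ : A2 →+ A2)
    (hφ : ∀ w : FW, φ (MonoidAlgebra.of ℤ FW w) = (MonoidAlgebra.of ℤ FW w) ^ p) :
    ∀ x ∈ AddSubgroup.closure commA, φ x ∈ AddSubgroup.closure commA := by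
  set S := AddSubgroup.closure commA with hS
  have base : ∀ x y : A2, (x*y)^p - (y*x)^p ∈ S := by
    intro x y
    obtain ⟨m, rfl⟩ : ∃ m, p = m + 1 := ⟨p - 1, (Nat.succ_pred_eq_of_pos hp.pos).symm⟩
    apply AddSubgroup.subset_closure
    refine ⟨x, (y*x)^m * y, ?_⟩
    rw [pow_succ_mul' x y m, pow_succ (y*x) m, mul_assoc]
  have key : ∀ a b : A2, φ (a*b) - φ (b*a) ∈ S := by
    intro a
    induction a using MonoidAlgebra.induction_on with
    | of u =>
      intro b
      induction b using MonoidAlgebra.induction_on with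
      | of v =>
        rw [← map_mul, ← map_mul, hφ, hφ, map_mul, map_mul]
        exact base _ _
      | add f g hf hg =>
        have : φ (MonoidAlgebra.of ℤ FW u * (f+g)) - φ ((f+g) * MonoidAlgebra.of ℤ FW u)
            = (φ (MonoidAlgebra.of ℤ FW u * f) - φ (f * MonoidAlgebra.of ℤ FW u))
            + (φ (MonoidAlgebra.of ℤ FW u * g) - φ (g * MonoidAlgebra.of ℤ FW u)) := by
          rw [mul_add, add_mul, map_add, map_add]; abel
        rw [this]; exact S.add_mem hf hg
      | smul r f hf =>
        have : φ (MonoidAlgebra.of ℤ FW u * (r • f)) - φ ((r • f) * MonoidAlgebra.of ℤ FW u)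
            = r • (φ (MonoidAlgebra.of ℤ FW u * f) - φ (f * MonoidAlgebra.of ℤ FW u)) := by
          rw [mul_smul_comm, smul_mul_assoc, map_zsmul, map_zsmul, smul_sub]
        rw [this]; exact S.zsmul_mem hf r
    | add f g hf hg =>
      intro b
      have : φ ((f+g) * b) - φ (b * (f+g))
          = (φ (f * b) - φ (b * f)) + (φ (g * b) - φ (b * g)) := by
        rw [mul_add, add_mul, map_add, map_add]; abel
      rw [this]; exact S.add_mem (hf b) (hg b)
    | smul r f hf =>
      intro b
      have : φ ((r • f) * b) - φ (b * (r • f))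
          = r • (φ (f * b) - φ (b * f)) := by
        rw [mul_smul_comm, smul_mul_assoc, map_zsmul, map_zsmul, smul_sub]
      rw [this]; exact S.zsmul_mem (hf b) r
  intro x hx
  refine AddSubgroup.closure_induction ?_ ?_ ?_ ?_ hx
  · rintro y ⟨a, b, rfl⟩
    rw [map_sub]
    exact key a b
  · simpa using S.zero_mem
  · intro a b _ _ ha hb
    rw [map_add]; exact S.add_mem ha hb
  · intro a _ ha
    rw [map_neg]; exact S.neg_mem ha
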